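/- Let X and Y be dendrons and let f : X → Y be any (not necessarily continuous) function. Then f is interval preserving (i.e. whenever w is between u and v in X, f(w) is between f(u) and f(v) in Y) if and only if the preimage under f of every connected subset of Y is connected. -/

import Mathlib

/-- A point `w` separates the points `u` and `v` in a topological space `X` if the complement
of `{w}` is the union of two disjoint open sets, one containing `u` and the other `v`. -/
def Separates {X : Type*} [TopologicalSpace X] (w u v : X) : Prop :=
  ∃ U V : Set X, IsOpen U ∧ IsOpen V ∧ u ∈ U ∧ v ∈ V ∧ Disjoint U V ∧ ({w}ᶜ : Set X) = U ∪ V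

/-- `w` is between `u` and `v`: `w` separates `u` and `v`, or `w ∈ {u, v}`. -/
def Between {X : Type*} [TopologicalSpace X] (u w v : X) : Prop :=
  Separates w u v ∨ w = u ∨ w = v

set_option linter.unusedSectionVars false

namespace Dendron5

open Set

variable {X : Type*} [TopologicalSpace X]

/-- The interval between `u` and `v`. -/
def Itv (u v : X) : Set X := {t | Between u t v}

lemma left_mem_Itv {u v : X} : u ∈ Itv u v := Or.inr (Or.inl rfl)
lemma right_mem_Itv {u v : X} : v ∈ Itv u v := Or.inr (Or.inr rfl)

lemma sep_ne_left {w u v : X} (h : Separates w u v) : w ≠ u := by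
  obtain ⟨U, V, _, _, hu, _, _, hc⟩ := h
  intro e
  have h2 : u ∈ U ∪ V := Or.inl hu
  rw [← hc] at h2
  exact h2 e.symm

lemma sep_ne_right {w u v : X} (h : Separates w u v) : w ≠ v := by
  obtain ⟨U, V, _, _, _, hv, _, hc⟩ := h
  intro e
  have h2 : v ∈ U ∪ V := Or.inr hv
  rw [← hc] at h2
  exact h2 e.symm

lemma sep_symm {w u v : X} (h : Separates w u v) : Separates w v u := by
  obtain ⟨U, V, hU, hV, hu, hv, hd, hc⟩ := h
  exact ⟨V, U, hV, hU, hv, hu, hd.symm, by rw [hc, Set.union_comm]⟩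

lemma not_sep_self_left {u v : X} : ¬ Separates u u v := fun h => sep_ne_left h rfl

/-- A preconnected set containing two points separated by `w` contains `w`. -/
lemma mem_of_separates {w u v : X} {S : Set X} (h : Separates w u v)
    (hS : IsPreconnected S) (hu : u ∈ S) (hv : v ∈ S) : w ∈ S := by
  obtain ⟨U, V, hU, hV, huU, hvV, hd, hc⟩ := h
  by_contra hw
  have hsub : S ⊆ U ∪ V := by
    intro x hx
    rw [← hc]
    simp only [Set.mem_compl_iff, Set.mem_singleton_iff]
    exact fun e => hw (e ▸ hx)
  obtain ⟨t, _, htU, htV⟩ := hS U V hU hV hsub ⟨u, hu, huU⟩ ⟨v, hv, hvV⟩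
  exact Set.disjoint_left.mp hd htU htV

/-- A preconnected set avoiding the cut point `w` and meeting the side `V` lies in `V`. -/
lemma subset_side {C U V : Set X} {w : X} (hC : IsPreconnected C)
    (hU : IsOpen U) (hV : IsOpen V) (hd : Disjoint U V) (hc : ({w}ᶜ : Set X) = U ∪ V)
    (hw : w ∉ C) {y : X} (hyC : y ∈ C) (hyV : y ∈ V) : C ⊆ V := by
  have hsub : C ⊆ U ∪ V := by
    intro x hx
    rw [← hc]
    simp only [Set.mem_compl_iff, Set.mem_singleton_iff]
    exact fun e => hw (e ▸ hx)
  intro x hx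
  by_contra hxV
  have hxU : x ∈ U := (hsub hx).resolve_right hxV
  obtain ⟨t, _, htU, htV⟩ := hC U V hU hV hsub ⟨x, hx, hxU⟩ ⟨y, hyC, hyV⟩
  exact Set.disjoint_left.mp hd htU htV

lemma side_union_eq_compl {U V : Set X} {w : X}
    (hd : Disjoint U V) (hc : ({w}ᶜ : Set X) = U ∪ V) :
    U ∪ {w} = Vᶜ := by
  ext x
  simp only [Set.mem_union, Set.mem_singleton_iff, Set.mem_compl_iff]
  constructor
  · rintro (hx | rfl)
    · exact fun hv => Set.disjoint_left.mp hd hx hv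
    · intro hv
      have h2 : x ∈ U ∪ V := Or.inr hv
      rw [← hc] at h2
      exact h2 rfl
  · intro hx
    by_cases hxw : x = w
    · exact Or.inr hxw
    · have h2 : x ∈ U ∪ V := by rw [← hc]; exact hxw
      exact Or.inl (h2.resolve_right hx)

lemma side_union_closed {U V : Set X} {w : X}
    (hV : IsOpen V) (hd : Disjoint U V) (hc : ({w}ᶜ : Set X) = U ∪ V) :
    IsClosed (U ∪ {w}) := by
  rw [side_union_eq_compl hd hc]
  exact hV.isClosed_compl

lemma compl_side_union {U V : Set X} {w : X}
    (hd : Disjoint U V) (hc : ({w}ᶜ : Set X) = U ∪ V) :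
    (U ∪ {w})ᶜ = V := by
  rw [side_union_eq_compl hd hc, compl_compl]

section SidePreconnected

variable [ConnectedSpace X]

private lemma side_aux {U V O₁ O₂ : Set X} {w b : X}
    (hU : IsOpen U) (hV : IsOpen V) (hd : Disjoint U V) (hc : ({w}ᶜ : Set X) = U ∪ V)
    (hO₁ : IsOpen O₁) (hO₂ : IsOpen O₂) (hcov : U ∪ {w} ⊆ O₁ ∪ O₂)
    (hw1 : w ∈ O₁) (hb : b ∈ (U ∪ {w}) ∩ O₂)
    (hemp : (U ∪ {w}) ∩ (O₁ ∩ O₂) = ∅) : False := by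
  have hwU : w ∉ U := by
    intro hwU
    have h2 : w ∈ U ∪ V := Or.inl hwU
    rw [← hc] at h2
    exact h2 rfl
  have hw2 : w ∉ O₂ := by
    intro hw2
    have h3 : w ∈ (U ∪ {w}) ∩ (O₁ ∩ O₂) := ⟨Or.inr rfl, hw1, hw2⟩
    rw [hemp] at h3
    exact h3
  have hBeq : U ∩ O₂ = Vᶜ ∩ O₁ᶜ := by
    ext x
    constructor
    · rintro ⟨hxU, hxO₂⟩
      refine ⟨fun hv => Set.disjoint_left.mp hd hxU hv, fun hxO₁ => ?_⟩
      have h3 : x ∈ (U ∪ {w}) ∩ (O₁ ∩ O₂) := ⟨Or.inl hxU, hxO₁, hxO₂⟩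
      rw [hemp] at h3
      exact h3
    · rintro ⟨hxV, hxO₁⟩
      have hxUw : x ∈ U ∪ {w} := by
        rw [side_union_eq_compl hd hc]
        exact hxV
      have hxU : x ∈ U := by
        rcases hxUw with h | h
        · exact h
        · simp only [Set.mem_singleton_iff] at h
          exact absurd (h ▸ hw1) hxO₁
      exact ⟨hxU, (hcov hxUw).resolve_left hxO₁⟩
  have hBclopen : IsClopen (U ∩ O₂) := by
    constructor
    · rw [hBeq]
      exact hV.isClosed_compl.inter hO₁.isClosed_compl
    · exact hU.inter hO₂
  have hBne : (U ∩ O₂).Nonempty := by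
    obtain ⟨hbUw, hbO₂⟩ := hb
    rcases hbUw with h | h
    · exact ⟨b, h, hbO₂⟩
    · simp only [Set.mem_singleton_iff] at h
      exact absurd (h ▸ hbO₂) hw2
  have := hBclopen.eq_univ hBne
  have hwB : w ∈ U ∩ O₂ := this ▸ Set.mem_univ w
  exact hwU hwB.1

/-- The side of a cut together with the cut point is preconnected. -/
lemma side_union_preconnected {U V : Set X} {w : X}
    (hU : IsOpen U) (hV : IsOpen V) (hd : Disjoint U V) (hc : ({w}ᶜ : Set X) = U ∪ V) :
    IsPreconnected (U ∪ {w}) := by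
  intro O₁ O₂ hO₁ hO₂ hcov ⟨a, ha⟩ ⟨b, hb⟩
  by_contra hne
  rw [Set.not_nonempty_iff_eq_empty] at hne
  rcases hcov (Or.inr rfl : w ∈ U ∪ {w}) with hw1 | hw2
  · exact side_aux hU hV hd hc hO₁ hO₂ hcov hw1 hb hne
  · refine side_aux hU hV hd hc hO₂ hO₁ ?_ hw2 ha ?_
    · rwa [Set.union_comm O₂ O₁]
    · rwa [Set.inter_comm O₂ O₁]

end SidePreconnected

section Part2

variable {X : Type*} [TopologicalSpace X]

/-- Directed intersections of compact closed preconnected sets are preconnected. -/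
lemma dirInter_preconnected [CompactSpace X] [T2Space X] {ι : Type*} [Nonempty ι]
    (K : ι → Set X) (hdir : Directed (· ⊇ ·) K) (hcl : ∀ i, IsClosed (K i))
    (hconn : ∀ i, IsPreconnected (K i)) : IsPreconnected (⋂ i, K i) := by
  rw [isPreconnected_iff_subset_of_fully_disjoint_closed (isClosed_iInter hcl)]
  intro F₁ F₂ hF₁ hF₂ hcov hdisj
  obtain ⟨O₁, O₂, hO₁, hO₂, hFO₁, hFO₂, hOd⟩ := normal_separation hF₁ hF₂ hdisj
  have hcomp : IsCompact ((O₁ ∪ O₂)ᶜ) := ((hO₁.union hO₂).isClosed_compl).isCompact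
  have hemp : ((O₁ ∪ O₂)ᶜ ∩ ⋂ i, K i) = ∅ := by
    rw [Set.eq_empty_iff_forall_notMem]
    rintro x ⟨hxc, hxK⟩
    exact hxc (Set.union_subset_union hFO₁ hFO₂ (hcov hxK))
  obtain ⟨i, hi⟩ := hcomp.elim_directed_family_closed K hcl hemp hdir
  have hKsub : K i ⊆ O₁ ∪ O₂ := by
    intro t ht
    by_contra hto
    have : t ∈ (O₁ ∪ O₂)ᶜ ∩ K i := ⟨hto, ht⟩
    rw [hi] at this
    exact this
  rcases (K i ∩ O₂).eq_empty_or_nonempty with h2 | h2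
  · left
    intro x hx
    have hxKi : x ∈ K i := Set.mem_iInter.mp hx i
    have hxO₁ : x ∈ O₁ := by
      rcases hKsub hxKi with h | h
      · exact h
      · exact absurd (Set.eq_empty_iff_forall_notMem.mp h2 x) (fun hh => hh ⟨hxKi, h⟩)
    rcases hcov hx with h | h
    · exact h
    · exact absurd (Set.disjoint_left.mp hOd hxO₁ (hFO₂ h)) (fun hh => hh)
  · have h1 : K i ∩ O₁ = ∅ := by
      rw [Set.eq_empty_iff_forall_notMem]
      rintro t ⟨htK, htO₁⟩
      obtain ⟨s, _, hs1, hs2⟩ := hconn i O₁ O₂ hO₁ hO₂ hKsub ⟨t, htK, htO₁⟩ h2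
      exact Set.disjoint_left.mp hOd hs1 hs2
    right
    intro x hx
    have hxKi : x ∈ K i := Set.mem_iInter.mp hx i
    have hxO₂ : x ∈ O₂ := by
      rcases hKsub hxKi with h | h
      · exact absurd (Set.eq_empty_iff_forall_notMem.mp h1 x) (fun hh => hh ⟨hxKi, h⟩)
      · exact h
    rcases hcov hx with h | h
    · exact absurd (Set.disjoint_left.mp hOd (hFO₁ h) hxO₂) (fun hh => hh)
    · exact h

/-- Intersecting a closed preconnected set with a closed side of a cut keeps it preconnected. -/
lemma inter_side_preconnected {C U V : Set X} {w : X} (hC : IsPreconnected C) (hCcl : IsClosed C)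
    (hU : IsOpen U) (hV : IsOpen V) (hd : Disjoint U V) (hc : ({w}ᶜ : Set X) = U ∪ V) :
    IsPreconnected (C ∩ (U ∪ {w})) := by
  have hUwcl : IsClosed (U ∪ {w}) := side_union_closed hV hd hc
  have hEcl : IsClosed (C ∩ (U ∪ {w})) := hCcl.inter hUwcl
  have hUclV : U ∩ closure V = ∅ := by
    have h2 := hU.inter_closure (t := V)
    rw [hd.inter_eq, closure_empty] at h2
    exact Set.subset_empty_iff.mp h2
  by_cases hwC : w ∈ C
  · have key : ∀ F₁ F₂ : Set X, IsClosed F₁ → IsClosed F₂ → C ∩ (U ∪ {w}) ⊆ F₁ ∪ F₂ →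
        Disjoint F₁ F₂ → w ∈ F₁ → C ∩ (U ∪ {w}) ⊆ F₁ := by
      intro F₁ F₂ hF₁ hF₂ hcov hdisj hwF₁
      by_contra hns
      obtain ⟨x, hxE, hxF₁⟩ := Set.not_subset.mp hns
      have hxF₂ : x ∈ F₂ := (hcov hxE).resolve_left hxF₁
      have hG₁cl : IsClosed ((C ∩ (U ∪ {w}) ∩ F₁) ∪ (C ∩ closure V)) :=
        (hEcl.inter hF₁).union (hCcl.inter isClosed_closure)
      have hcovC : C ⊆ ((C ∩ (U ∪ {w}) ∩ F₁) ∪ (C ∩ closure V)) ∪ (C ∩ (U ∪ {w}) ∩ F₂) := by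
        intro t htC
        by_cases htw : t = w
        · subst htw
          exact Or.inl (Or.inl ⟨⟨htC, Or.inr rfl⟩, hwF₁⟩)
        · have h3 : t ∈ U ∪ V := by rw [← hc]; exact htw
          rcases h3 with h | h
          · have htE : t ∈ C ∩ (U ∪ {w}) := ⟨htC, Or.inl h⟩
            rcases hcov htE with h1 | h1
            · exact Or.inl (Or.inl ⟨htE, h1⟩)
            · exact Or.inr ⟨htE, h1⟩
          · exact Or.inl (Or.inr ⟨htC, subset_closure h⟩)
      have hdisjG : Disjoint ((C ∩ (U ∪ {w}) ∩ F₁) ∪ (C ∩ closure V)) (C ∩ (U ∪ {w}) ∩ F₂) := by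
        rw [Set.disjoint_left]
        rintro t (⟨htE, htF₁⟩ | ⟨htC, htclV⟩) ⟨htE', htF₂⟩
        · exact Set.disjoint_left.mp hdisj htF₁ htF₂
        · rcases htE'.2 with h | h
          · exact (Set.eq_empty_iff_forall_notMem.mp hUclV t) ⟨h, htclV⟩
          · simp only [Set.mem_singleton_iff] at h
            subst h
            exact Set.disjoint_left.mp hdisj hwF₁ htF₂
      rcases (isPreconnected_iff_subset_of_fully_disjoint_closed hCcl).mp hC _ _ hG₁cl
          (hEcl.inter hF₂) hcovC hdisjG with h | h
      · exact Set.disjoint_left.mp hdisjG (h hxE.1) ⟨hxE, hxF₂⟩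
      · exact Set.disjoint_left.mp hdisj hwF₁ (h hwC).2
    rw [isPreconnected_iff_subset_of_fully_disjoint_closed hEcl]
    intro F₁ F₂ hF₁ hF₂ hcov hdisj
    have hwE : w ∈ C ∩ (U ∪ {w}) := ⟨hwC, Or.inr rfl⟩
    rcases hcov hwE with h | h
    · exact Or.inl (key F₁ F₂ hF₁ hF₂ hcov hdisj h)
    · exact Or.inr (key F₂ F₁ hF₂ hF₁ (by rwa [Set.union_comm F₁ F₂] at hcov) hdisj.symm h)
  · have hEeq : C ∩ (U ∪ {w}) = C ∩ U := by
      ext t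
      constructor
      · rintro ⟨htC, h | h⟩
        · exact ⟨htC, h⟩
        · simp only [Set.mem_singleton_iff] at h
          exact absurd (h ▸ htC) hwC
      · rintro ⟨htC, h⟩
        exact ⟨htC, Or.inl h⟩
    rw [hEeq]
    rcases (C ∩ U).eq_empty_or_nonempty with h | ⟨t0, ht0C, ht0U⟩
    · rw [h]
      exact isPreconnected_empty
    · have hCU : C ⊆ U := subset_side hC hV hU hd.symm (by rw [hc, Set.union_comm]) hwC ht0C ht0U
      rw [Set.inter_eq_left.mpr hCU]
      exact hC

end Part2
section Part3

variable {X : Type*} [TopologicalSpace X]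

/-- L3: a point separating two points of an interval lies in the interval. -/
lemma sep_mem_Itv [ConnectedSpace X] {u v p q w : X} (hp : p ∈ Itv u v) (hq : q ∈ Itv u v)
    (h : Separates w p q) : w ∈ Itv u v := by
  obtain ⟨U, V, hU, hV, hpU, hqV, hd, hc⟩ := h
  by_cases hwu : w = u
  · exact Or.inr (Or.inl hwu)
  by_cases hwv : w = v
  · exact Or.inr (Or.inr hwv)
  have huUV : u ∈ U ∪ V := by
    rw [← hc]
    simp only [Set.mem_compl_iff, Set.mem_singleton_iff]
    exact fun e => hwu e.symm
  have hvUV : v ∈ U ∪ V := by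
    rw [← hc]
    simp only [Set.mem_compl_iff, Set.mem_singleton_iff]
    exact fun e => hwv e.symm
  rcases huUV with huU | huV <;> rcases hvUV with hvU | hvV
  · -- u, v ∈ U : contradiction via q
    exfalso
    have hqsep : Separates q u v := by
      rcases hq with h' | h' | h'
      · exact h'
      · exact absurd (h' ▸ hqV) (fun hh => Set.disjoint_left.mp hd huU hh)
      · exact absurd (h' ▸ hqV) (fun hh => Set.disjoint_left.mp hd hvU hh)
    have hqC : q ∈ U ∪ {w} :=
      mem_of_separates hqsep (side_union_preconnected hU hV hd hc) (Or.inl huU) (Or.inl hvU)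
    rcases hqC with h' | h'
    · exact Set.disjoint_left.mp hd h' hqV
    · simp only [Set.mem_singleton_iff] at h'
      have : q ∈ U ∪ V := Or.inr hqV
      rw [← hc] at this
      exact this h'
  · exact Or.inl ⟨U, V, hU, hV, huU, hvV, hd, hc⟩
  · exact Or.inl ⟨V, U, hV, hU, huV, hvU, hd.symm, by rw [hc, Set.union_comm]⟩
  · -- u, v ∈ V : contradiction via p
    exfalso
    have hpsep : Separates p u v := by
      rcases hp with h' | h' | h'
      · exact h'
      · exact absurd (h' ▸ hpU) (fun hh => Set.disjoint_left.mp hd hh huV)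
      · exact absurd (h' ▸ hpU) (fun hh => Set.disjoint_left.mp hd hh hvV)
    have hpC : p ∈ V ∪ {w} :=
      mem_of_separates hpsep (side_union_preconnected hV hU hd.symm (by rw [hc, Set.union_comm]))
        (Or.inl huV) (Or.inl hvV)
    rcases hpC with h' | h'
    · exact Set.disjoint_left.mp hd hpU h'
    · simp only [Set.mem_singleton_iff] at h'
      have : p ∈ U ∪ V := Or.inl hpU
      rw [← hc] at this
      exact this h'

/-- The set of points separating `x` from `y`. -/
def sepSet (x y : X) : Set X := {w | Separates w x y}

lemma sepSet_subset_Itv {x y : X} : sepSet x y ⊆ Itv x y := fun _ h => Or.inl h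

open Classical in
/-- A chosen side of each separator containing `x`. -/
noncomputable def sA (x y w : X) : Set X :=
  if h : Separates w x y then h.choose else ∅

open Classical in
/-- A chosen side of each separator containing `y`. -/
noncomputable def sB (x y w : X) : Set X :=
  if h : Separates w x y then h.choose_spec.choose else ∅

open Classical in
lemma sAB_spec {x y w : X} (h : Separates w x y) :
    IsOpen (sA x y w) ∧ IsOpen (sB x y w) ∧ x ∈ sA x y w ∧ y ∈ sB x y w ∧
      Disjoint (sA x y w) (sB x y w) ∧ ({w}ᶜ : Set X) = sA x y w ∪ sB x y w := by
  simp only [sA, sB, dif_pos h]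
  exact h.choose_spec.choose_spec


lemma sideA_closed {x y w : X} (h : Separates w x y) : IsClosed (sA x y w ∪ {w}) :=
  let s := sAB_spec h
  side_union_closed s.2.1 s.2.2.2.2.1 s.2.2.2.2.2

lemma mem_sB_of_ne {x y w t : X} (h : Separates w x y) (htw : t ≠ w)
    (htA : t ∉ sA x y w) : t ∈ sB x y w := by
  obtain ⟨_, _, _, _, _, hc⟩ := sAB_spec h
  have : t ∈ sA x y w ∪ sB x y w := by rw [← hc]; exact htw
  exact this.resolve_left htA

section WithConn

variable [ConnectedSpace X]

lemma sideA_preconnected {x y w : X} (h : Separates w x y) :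
    IsPreconnected (sA x y w ∪ {w}) :=
  let s := sAB_spec h
  side_union_preconnected s.1 s.2.1 s.2.2.2.2.1 s.2.2.2.2.2

lemma sideB_preconnected {x y w : X} (h : Separates w x y) :
    IsPreconnected (sB x y w ∪ {w}) :=
  let s := sAB_spec h
  side_union_preconnected s.2.1 s.1 s.2.2.2.2.1.symm (by rw [s.2.2.2.2.2, Set.union_comm])

/-- Two separators cannot each lie on the other's `x`-side. -/
lemma both_A {x y w w' : X} (hw : Separates w x y) (hw' : Separates w' x y) (hne : w ≠ w')
    (h1 : w' ∈ sA x y w) (h2 : w ∈ sA x y w') : False := by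
  obtain ⟨hAo, hBo, hxA, hyB, hAB, hcAB⟩ := sAB_spec hw
  obtain ⟨hAo', hBo', hxA', hyB', hAB', hcAB'⟩ := sAB_spec hw'
  have hwC : w' ∉ sB x y w ∪ {w} := by
    rintro (h | h)
    · exact Set.disjoint_left.mp hAB h1 h
    · exact hne (by simpa using h.symm)
  have hsub : sB x y w ∪ {w} ⊆ sB x y w' :=
    subset_side (sideB_preconnected hw) hAo' hBo' hAB' hcAB' hwC (Or.inl hyB) hyB'
  exact Set.disjoint_left.mp hAB' h2 (hsub (Or.inr rfl))

/-- Helper for the chain lemma. -/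
lemma chain_helper {x y w w' : X} (hw : Separates w x y) (hw' : Separates w' x y)
    (hmem : w ∈ sB x y w') : sA x y w' ∪ {w'} ⊆ sA x y w ∪ {w} := by
  obtain ⟨hAo, hBo, hxA, hyB, hAB, hcAB⟩ := sAB_spec hw
  obtain ⟨hAo', hBo', hxA', hyB', hAB', hcAB'⟩ := sAB_spec hw'
  have hwne : w ≠ w' := by
    intro e
    have : w ∈ sA x y w' ∪ sB x y w' := Or.inr hmem
    rw [← hcAB'] at this
    exact this e
  have hwC : w ∉ sA x y w' ∪ {w'} := by
    rintro (h | h)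
    · exact Set.disjoint_left.mp hAB' h hmem
    · exact hwne (by simpa using h)
  have hsub : sA x y w' ∪ {w'} ⊆ sA x y w :=
    subset_side (sideA_preconnected hw') hBo hAo hAB.symm (by rw [hcAB, Set.union_comm]) hwC
      (Or.inl hxA') hxA
  exact hsub.trans Set.subset_union_left

/-- The chosen `x`-sides form a chain. -/
lemma chain_sides {x y w w' : X} (hw : Separates w x y) (hw' : Separates w' x y) :
    sA x y w ∪ {w} ⊆ sA x y w' ∪ {w'} ∨ sA x y w' ∪ {w'} ⊆ sA x y w ∪ {w} := by
  by_cases he : w = w'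
  · subst he; exact Or.inl subset_rfl
  by_cases hm : w ∈ sA x y w'
  · left
    have hm' : w' ∈ sB x y w := by
      refine mem_sB_of_ne hw (Ne.symm he) ?_
      intro h1
      exact both_A hw hw' he h1 hm
    exact chain_helper hw' hw hm'
  · right
    exact chain_helper hw hw' (mem_sB_of_ne hw' he hm)

end WithConn

/-- Intersection of the chosen `x`-sides over all separators of `x` and `y`. -/
def Dset (x y : X) : Set X := ⋂ w : ↥(sepSet x y), (sA x y ↑w ∪ {(↑w : X)})

lemma mem_Dset {x y t : X} : t ∈ Dset x y ↔ ∀ w : ↥(sepSet x y), t ∈ sA x y ↑w ∪ {(↑w : X)} :=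
  Set.mem_iInter

lemma x_mem_Dset {x y : X} : x ∈ Dset x y :=
  mem_Dset.mpr fun w => Or.inl (sAB_spec w.2).2.2.1

lemma y_not_mem_Dset {x y : X} (w₀ : ↥(sepSet x y)) : y ∉ Dset x y := by
  intro h
  obtain ⟨_, _, _, hyB, hAB, hc⟩ := sAB_spec w₀.2
  rcases mem_Dset.mp h w₀ with h' | h'
  · exact Set.disjoint_left.mp hAB h' hyB
  · simp only [Set.mem_singleton_iff] at h'
    have : y ∈ sA x y ↑w₀ ∪ sB x y ↑w₀ := Or.inr hyB
    rw [← hc] at this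
    exact this h'

lemma Dset_closed {x y : X} : IsClosed (Dset x y) :=
  isClosed_iInter fun w => sideA_closed w.2

lemma mem_sB_of_not_mem_Dset {x y t : X} (ht : t ∉ Dset x y) :
    ∃ w : ↥(sepSet x y), t ∈ sB x y ↑w := by
  rw [mem_Dset] at ht
  push_neg at ht
  obtain ⟨w, hw⟩ := ht
  refine ⟨w, mem_sB_of_ne w.2 ?_ ?_⟩
  · intro e; exact hw (Or.inr (by simp [e]))
  · intro h; exact hw (Or.inl h)

section WithAll

variable [CompactSpace X] [T2Space X] [ConnectedSpace X]

lemma Dset_preconnected {x y : X} (hne : Nonempty ↥(sepSet x y)) :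
    IsPreconnected (Dset x y) := by
  refine dirInter_preconnected _ ?_ (fun w => sideA_closed w.2) (fun w => sideA_preconnected w.2)
  intro i j
  rcases chain_sides i.2 j.2 with h | h
  · exact ⟨i, subset_rfl, h⟩
  · exact ⟨j, h, subset_rfl⟩

/-- No separator of `x` and `y` belongs to `Dset x y`. -/
lemma sep_not_mem_Dset (hsep : ∀ a b : X, a ≠ b → ∃ w, Separates w a b)
    {x y t : X} (h : Separates t x y) : t ∉ Dset x y := by
  intro htD
  obtain ⟨hAo, hBo, hxA, hyB, hAB, hcAB⟩ := sAB_spec h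
  obtain ⟨s, hs⟩ := hsep t x (sep_ne_left h)
  have hsItv : s ∈ Itv x y := sep_mem_Itv (Or.inl h) left_mem_Itv hs
  have hsx : s ≠ x := sep_ne_right hs
  have hsy : s ≠ y := by
    intro e
    have hyC : y ∈ sA x y t ∪ {t} :=
      mem_of_separates (e ▸ hs) (sideA_preconnected h) (Or.inr rfl) (Or.inl hxA)
    rcases hyC with h' | h'
    · exact Set.disjoint_left.mp hAB h' hyB
    · simp only [Set.mem_singleton_iff] at h'
      exact (sep_ne_right h) h'.symm
  have hsxy : Separates s x y := by
    rcases hsItv with h' | h' | h'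
    · exact h'
    · exact absurd h' hsx
    · exact absurd h' hsy
  have htA : t ∈ sA x y s := by
    rcases mem_Dset.mp htD ⟨s, hsxy⟩ with h' | h'
    · exact h'
    · simp only [Set.mem_singleton_iff] at h'
      exact absurd h'.symm (sep_ne_left hs)
  have hsB : s ∈ sB x y t := by
    refine mem_sB_of_ne h (sep_ne_left hs) ?_
    intro h1
    exact both_A h hsxy (fun e => (sep_ne_left hs) e.symm) h1 htA
  have hsC : s ∈ sA x y t ∪ {t} :=
    mem_of_separates hs (sideA_preconnected h) (Or.inr rfl) (Or.inl hxA)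
  rcases hsC with h' | h'
  · exact Set.disjoint_left.mp hAB h' hsB
  · simp only [Set.mem_singleton_iff] at h'
    exact (sep_ne_left hs) h'

end WithAll

end Part3
section Part4

variable {X : Type*} [TopologicalSpace X]

lemma frontier_subset_self {S : Set X} (hcl : IsClosed S) : frontier S ⊆ S := by
  have h := frontier_subset_closure (s := S)
  rwa [hcl.closure_eq] at h

lemma mem_closure_compl_of_frontier {S : Set X} {t : X} (h : t ∈ frontier S) :
    t ∈ closure Sᶜ := by
  rw [frontier_eq_closure_inter_closure] at h
  exact h.2

lemma not_mem_interior_of_frontier {S : Set X} {t : X} (h : t ∈ frontier S) :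
    t ∉ interior S := by
  intro h2
  have h3 := mem_closure_compl_of_frontier h
  rw [closure_compl] at h3
  exact h3 h2

lemma frontier_nonempty_of_closed [ConnectedSpace X] {S : Set X} (hcl : IsClosed S)
    (hne : S.Nonempty) (hproper : S ≠ Set.univ) : (frontier S).Nonempty := by
  by_contra h
  rw [Set.not_nonempty_iff_eq_empty] at h
  have hsub : S ⊆ interior S := by
    intro t ht
    by_contra hti
    have h2 : t ∈ frontier S := by
      rw [frontier_eq_closure_inter_closure, closure_compl]
      exact ⟨subset_closure ht, hti⟩
    rw [h] at h2
    exact h2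
  have hint : interior S = S := Set.Subset.antisymm interior_subset hsub
  have hopen : IsOpen S := by rw [← hint]; exact isOpen_interior
  exact hproper ((IsClopen.eq_univ ⟨hcl, hopen⟩ hne))

section WithAll4

variable [CompactSpace X] [T2Space X] [ConnectedSpace X]

lemma Dset_frontier_eq (hsep : ∀ a b : X, a ≠ b → ∃ w, Separates w a b)
    {x y : X} (hxy : x ≠ y) :
    ∀ m₁ ∈ frontier (Dset x y), ∀ m₂ ∈ frontier (Dset x y), m₁ = m₂ := by
  intro m₁ hm₁ m₂ hm₂
  by_contra hne12
  obtain ⟨w₀, hw₀⟩ := hsep x y hxy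
  have hnei : Nonempty ↥(sepSet x y) := ⟨⟨w₀, hw₀⟩⟩
  have hDcl : IsClosed (Dset x y) := Dset_closed
  have hDpre : IsPreconnected (Dset x y) := Dset_preconnected hnei
  have hm₁D : m₁ ∈ Dset x y := frontier_subset_self hDcl hm₁
  have hm₂D : m₂ ∈ Dset x y := frontier_subset_self hDcl hm₂
  obtain ⟨s, hssep⟩ := hsep m₁ m₂ hne12
  have hsD : s ∈ Dset x y := mem_of_separates hssep hDpre hm₁D hm₂D
  obtain ⟨S₁, S₂, hS₁, hS₂, hm₁S, hm₂S, hSd, hSc⟩ := hssep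
  have hys : y ≠ s := fun e => (y_not_mem_Dset ⟨w₀, hw₀⟩) (e ▸ hsD)
  have hyS : y ∈ S₁ ∪ S₂ := by
    rw [← hSc]
    simp only [Set.mem_compl_iff, Set.mem_singleton_iff]
    exact hys
  have key : ∀ Sm Sy : Set X, IsOpen Sm → IsOpen Sy → Disjoint Sm Sy →
      ({s}ᶜ : Set X) = Sm ∪ Sy → y ∈ Sy → (Dset x y)ᶜ ⊆ Sy := by
    intro Sm Sy hSmo hSyo hdd hcc hySy t ht
    obtain ⟨w, htB⟩ := mem_sB_of_not_mem_Dset ht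
    obtain ⟨hAo, hBo, hxA, hyB, hAB, hcAB⟩ := sAB_spec w.2
    have hsw : s ≠ ↑w := fun e => sep_not_mem_Dset hsep (e ▸ w.2) hsD
    have hsA : s ∈ sA x y ↑w := by
      rcases mem_Dset.mp hsD w with h' | h'
      · exact h'
      · exact absurd (by simpa using h') hsw
    have hsC : s ∉ sB x y ↑w ∪ {(↑w : X)} := by
      rintro (h' | h')
      · exact Set.disjoint_left.mp hAB hsA h'
      · exact hsw (by simpa using h')
    have hsub : sB x y ↑w ∪ {(↑w : X)} ⊆ Sy :=
      subset_side (sideB_preconnected w.2) hSmo hSyo hdd hcc hsC (Or.inl hyB) hySy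
    exact hsub (Or.inl htB)
  rcases hyS with h | h
  · have h2 := key S₂ S₁ hS₂ hS₁ hSd.symm (by rw [hSc, Set.union_comm]) h
    obtain ⟨t, htS₂, htD⟩ :=
      mem_closure_iff.mp (mem_closure_compl_of_frontier hm₂) S₂ hS₂ hm₂S
    exact Set.disjoint_left.mp hSd (h2 htD) htS₂
  · have h2 := key S₁ S₂ hS₁ hS₂ hSd hSc h
    obtain ⟨t, htS₁, htD⟩ :=
      mem_closure_iff.mp (mem_closure_compl_of_frontier hm₁) S₁ hS₁ hm₁S
    exact Set.disjoint_left.mp hSd htS₁ (h2 htD)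

/-- A closed set whose frontier is the single point `p` yields a cut at `p`. -/
lemma frontier_cut {S : Set X} (hcl : IsClosed S) {p : X} (hp : p ∈ frontier S)
    (huniq : ∀ t ∈ frontier S, t = p) :
    IsOpen (S \ {p}) ∧ Disjoint (S \ {p}) Sᶜ ∧ ({p}ᶜ : Set X) = Sᶜ ∪ (S \ {p}) := by
  have hpS : p ∈ S := frontier_subset_self hcl hp
  have heq : S \ {p} = interior S := by
    ext t
    constructor
    · rintro ⟨htD, htp⟩
      by_contra hti
      have h2 : t ∈ frontier S := by
        rw [frontier_eq_closure_inter_closure, closure_compl]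
        exact ⟨subset_closure htD, hti⟩
      exact htp (by simpa using huniq t h2)
    · intro hti
      refine ⟨interior_subset hti, ?_⟩
      intro e
      simp only [Set.mem_singleton_iff] at e
      exact (not_mem_interior_of_frontier hp) (e ▸ hti)
  refine ⟨by rw [heq]; exact isOpen_interior, ?_, ?_⟩
  · rw [Set.disjoint_left]
    rintro t ⟨htS, _⟩ ht
    exact ht htS
  · ext t
    simp only [Set.mem_compl_iff, Set.mem_singleton_iff, Set.mem_union, Set.mem_diff]
    constructor
    · intro htp
      by_cases htS : t ∈ S
      · exact Or.inr ⟨htS, htp⟩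
      · exact Or.inl htS
    · rintro (h | ⟨_, h⟩)
      · intro e
        exact h (e ▸ hpS)
      · exact h

/-- Any frontier point `p` of `Dset x y` separates points outside `Dset x y` from points of
`Dset x y` other than `p`. -/
lemma Dset_frontier_cut (hsep : ∀ a b : X, a ≠ b → ∃ w, Separates w a b)
    {x y : X} (hxy : x ≠ y) {p : X} (hp : p ∈ frontier (Dset x y)) {a b : X}
    (ha : a ∉ Dset x y) (hb : b ∈ Dset x y) (hbp : b ≠ p) : Separates p a b := by
  obtain ⟨hopen, hdisj, hcompl⟩ :=
    frontier_cut Dset_closed hp (fun t ht => Dset_frontier_eq hsep hxy t ht p hp)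
  exact ⟨(Dset x y)ᶜ, Dset x y \ {p}, Dset_closed.isOpen_compl, hopen, ha, ⟨hb, hbp⟩,
    hdisj.symm, by rw [hcompl]⟩

end WithAll4

end Part4
section Part5

variable {X : Type*} [TopologicalSpace X] [CompactSpace X] [T2Space X] [ConnectedSpace X]

/-- **Claim A**: any point not between `u` and `v` can be cut off from both by some point. -/
lemma claimA (hsep : ∀ a b : X, a ≠ b → ∃ w, Separates w a b) {z u v : X}
    (hzu : z ≠ u) (hzv : z ≠ v) (hns : ¬ Separates z u v) :
    ∃ (w : X) (A B : Set X), IsOpen A ∧ IsOpen B ∧ z ∈ A ∧ u ∈ B ∧ v ∈ B ∧ Disjoint A B ∧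
      ({w}ᶜ : Set X) = A ∪ B := by
  by_cases hvzu : Separates v z u
  · -- preliminary case: `v` separates `z` and `u`.
    obtain ⟨s, hs⟩ := hsep z v hzv
    obtain ⟨A', B', hA', hB', hzA', hvB', hd', hc'⟩ := hs
    obtain ⟨Av, Bv, hAv, hBv, hzAv, huBv, hdv, hcv⟩ := hvzu
    have huB' : u ∈ B' := by
      by_contra huB'
      have huC : u ∈ A' ∪ {s} := by
        by_cases hus : u = s
        · exact Or.inr (by simp [hus])
        · have : u ∈ A' ∪ B' := by
            rw [← hc']
            simp only [Set.mem_compl_iff, Set.mem_singleton_iff]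
            exact hus
          exact Or.inl (this.resolve_right huB')
      have hvC : v ∈ A' ∪ {s} :=
        mem_of_separates ⟨Av, Bv, hAv, hBv, hzAv, huBv, hdv, hcv⟩
          (side_union_preconnected hA' hB' hd' hc') (Or.inl hzA') huC
      rcases hvC with h | h
      · exact Set.disjoint_left.mp hd' h hvB'
      · simp only [Set.mem_singleton_iff] at h
        have : v ∈ A' ∪ B' := Or.inr hvB'
        rw [← hc'] at this
        exact this h
    exact ⟨s, A', B', hA', hB', hzA', huB', hvB', hd', hc'⟩
  by_cases huzv : Separates u z v
  · obtain ⟨s, hs⟩ := hsep z u hzu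
    obtain ⟨A', B', hA', hB', hzA', huB', hd', hc'⟩ := hs
    obtain ⟨Au, Bu, hAu, hBu, hzAu, hvBu, hdu, hcu⟩ := huzv
    have hvB' : v ∈ B' := by
      by_contra hvB'
      have hvC : v ∈ A' ∪ {s} := by
        by_cases hvs : v = s
        · exact Or.inr (by simp [hvs])
        · have : v ∈ A' ∪ B' := by
            rw [← hc']
            simp only [Set.mem_compl_iff, Set.mem_singleton_iff]
            exact hvs
          exact Or.inl (this.resolve_right hvB')
      have huC : u ∈ A' ∪ {s} :=
        mem_of_separates ⟨Au, Bu, hAu, hBu, hzAu, hvBu, hdu, hcu⟩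
          (side_union_preconnected hA' hB' hd' hc') (Or.inl hzA') hvC
      rcases huC with h | h
      · exact Set.disjoint_left.mp hd' h huB'
      · simp only [Set.mem_singleton_iff] at h
        have : u ∈ A' ∪ B' := Or.inr huB'
        rw [← hc'] at this
        exact this h
    exact ⟨s, A', B', hA', hB', hzA', huB', hvB', hd', hc'⟩
  by_cases hgood1 : ∃ w : ↥(sepSet z u), v ∈ sB z u ↑w
  · obtain ⟨w, hvB⟩ := hgood1
    obtain ⟨hAo, hBo, hzA, huB, hAB, hcAB⟩ := sAB_spec w.2
    exact ⟨↑w, sA z u ↑w, sB z u ↑w, hAo, hBo, hzA, huB, hvB, hAB, hcAB⟩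
  by_cases hgood2 : ∃ w : ↥(sepSet z v), u ∈ sB z v ↑w
  · obtain ⟨w, huB⟩ := hgood2
    obtain ⟨hAo, hBo, hzA, hvB, hAB, hcAB⟩ := sAB_spec w.2
    exact ⟨↑w, sA z v ↑w, sB z v ↑w, hAo, hBo, hzA, huB, hvB, hAB, hcAB⟩
  -- the "bad" case
  push_neg at hgood1 hgood2
  have hvD : v ∈ Dset z u := by
    rw [mem_Dset]
    intro w
    by_cases hvw : v = ↑w
    · exact Or.inr (by simp [hvw])
    · left
      by_contra hvA
      exact hgood1 w (mem_sB_of_ne w.2 hvw hvA)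
  have huE : u ∈ Dset z v := by
    rw [mem_Dset]
    intro w
    by_cases huw : u = ↑w
    · exact Or.inr (by simp [huw])
    · left
      by_contra huA
      exact hgood2 w (mem_sB_of_ne w.2 huw huA)
  obtain ⟨wzu, hwzu⟩ := hsep z u hzu
  obtain ⟨wzv, hwzv⟩ := hsep z v hzv
  have hGcl : IsClosed (Dset z u ∩ Dset z v) := Dset_closed.inter Dset_closed
  have hGpre : IsPreconnected (Dset z u ∩ Dset z v) := by
    have hrw : Dset z u ∩ Dset z v =
        ⋂ p : ↥(sepSet z u) × ↥(sepSet z v),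
          ((sA z u ↑p.1 ∪ {(↑p.1 : X)}) ∩ (sA z v ↑p.2 ∪ {(↑p.2 : X)})) := by
      ext t
      simp only [Set.mem_inter_iff, Set.mem_iInter, Dset]
      constructor
      · rintro ⟨h1, h2⟩ p
        exact ⟨h1 p.1, h2 p.2⟩
      · intro h
        exact ⟨fun w => (h (w, ⟨wzv, hwzv⟩)).1, fun w' => (h (⟨wzu, hwzu⟩, w')).2⟩
    rw [hrw]
    have : Nonempty (↥(sepSet z u) × ↥(sepSet z v)) := ⟨(⟨wzu, hwzu⟩, ⟨wzv, hwzv⟩)⟩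
    apply dirInter_preconnected
    · intro i j
      rcases chain_sides i.1.2 j.1.2 with h1 | h1 <;> rcases chain_sides i.2.2 j.2.2 with h2 | h2
      · exact ⟨(i.1, i.2), Set.inter_subset_inter subset_rfl subset_rfl,
          Set.inter_subset_inter h1 h2⟩
      · exact ⟨(i.1, j.2), Set.inter_subset_inter subset_rfl h2,
          Set.inter_subset_inter h1 subset_rfl⟩
      · exact ⟨(j.1, i.2), Set.inter_subset_inter h1 subset_rfl,
          Set.inter_subset_inter subset_rfl h2⟩
      · exact ⟨(j.1, j.2), Set.inter_subset_inter h1 h2,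
          Set.inter_subset_inter subset_rfl subset_rfl⟩
    · exact fun p => (sideA_closed p.1.2).inter (sideA_closed p.2.2)
    · intro p
      obtain ⟨hAo, hBo, hzA, hvB, hAB, hcAB⟩ := sAB_spec p.2.2
      exact inter_side_preconnected (sideA_preconnected p.1.2) (sideA_closed p.1.2)
        hAo hBo hAB hcAB
  have hzG : z ∈ Dset z u ∩ Dset z v := ⟨x_mem_Dset, x_mem_Dset⟩
  have huG : u ∉ Dset z u ∩ Dset z v := fun h => y_not_mem_Dset ⟨wzu, hwzu⟩ h.1
  have hvG : v ∉ Dset z u ∩ Dset z v := fun h => y_not_mem_Dset ⟨wzv, hwzv⟩ h.2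
  -- the frontier of `G` is a single point
  have hGfront : ∀ m₁ ∈ frontier (Dset z u ∩ Dset z v), ∀ m₂ ∈ frontier (Dset z u ∩ Dset z v),
      m₁ = m₂ := by
    intro m₁ hm₁ m₂ hm₂
    by_contra hne12
    obtain ⟨s, hssep⟩ := hsep m₁ m₂ hne12
    have hsG : s ∈ Dset z u ∩ Dset z v :=
      mem_of_separates hssep hGpre (frontier_subset_self hGcl hm₁) (frontier_subset_self hGcl hm₂)
    have hsnot1 : ¬ Separates s z u := fun h => sep_not_mem_Dset hsep h hsG.1
    have hsnot2 : ¬ Separates s z v := fun h => sep_not_mem_Dset hsep h hsG.2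
    obtain ⟨S₁, S₂, hS₁, hS₂, hm₁S, hm₂S, hSd, hSc⟩ := hssep
    have hus : u ≠ s := fun e => huG (e ▸ hsG)
    have hvs : v ≠ s := fun e => hvG (e ▸ hsG)
    have huS : u ∈ S₁ ∪ S₂ := by
      rw [← hSc]
      simp only [Set.mem_compl_iff, Set.mem_singleton_iff]
      exact hus
    have hvS : v ∈ S₁ ∪ S₂ := by
      rw [← hSc]
      simp only [Set.mem_compl_iff, Set.mem_singleton_iff]
      exact hvs
    have key1 : ∀ (w : ↥(sepSet z u)) (Sm Sy : Set X), IsOpen Sm → IsOpen Sy → Disjoint Sm Sy →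
        ({s}ᶜ : Set X) = Sm ∪ Sy → u ∈ Sy → sB z u ↑w ∪ {(↑w : X)} ⊆ Sy := by
      intro w Sm Sy hSmo hSyo hdd hcc huSy
      obtain ⟨hAo, hBo, hzA, huB, hAB, hcAB⟩ := sAB_spec w.2
      have hsw : s ≠ ↑w := fun e => hsnot1 (e ▸ w.2)
      have hsA : s ∈ sA z u ↑w := by
        rcases Set.mem_iInter.mp hsG.1 w with h' | h'
        · exact h'
        · exact absurd (by simpa using h') hsw
      have hsC : s ∉ sB z u ↑w ∪ {(↑w : X)} := by
        rintro (h' | h')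
        · exact Set.disjoint_left.mp hAB hsA h'
        · exact hsw (by simpa using h')
      exact subset_side (sideB_preconnected w.2) hSmo hSyo hdd hcc hsC (Or.inl huB) huSy
    have key2 : ∀ (w : ↥(sepSet z v)) (Sm Sy : Set X), IsOpen Sm → IsOpen Sy → Disjoint Sm Sy →
        ({s}ᶜ : Set X) = Sm ∪ Sy → v ∈ Sy → sB z v ↑w ∪ {(↑w : X)} ⊆ Sy := by
      intro w Sm Sy hSmo hSyo hdd hcc hvSy
      obtain ⟨hAo, hBo, hzA, hvB, hAB, hcAB⟩ := sAB_spec w.2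
      have hsw : s ≠ ↑w := fun e => hsnot2 (e ▸ w.2)
      have hsA : s ∈ sA z v ↑w := by
        rcases Set.mem_iInter.mp hsG.2 w with h' | h'
        · exact h'
        · exact absurd (by simpa using h') hsw
      have hsC : s ∉ sB z v ↑w ∪ {(↑w : X)} := by
        rintro (h' | h')
        · exact Set.disjoint_left.mp hAB hsA h'
        · exact hsw (by simpa using h')
      exact subset_side (sideB_preconnected w.2) hSmo hSyo hdd hcc hsC (Or.inl hvB) hvSy
    have hsub1 : u ∈ S₁ → v ∈ S₁ → (Dset z u ∩ Dset z v)ᶜ ⊆ S₁ := by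
      intro hu1 hv1 t ht
      rw [Set.mem_compl_iff, Set.mem_inter_iff, not_and_or] at ht
      rcases ht with ht | ht
      · obtain ⟨w, htB⟩ := mem_sB_of_not_mem_Dset ht
        exact key1 w S₂ S₁ hS₂ hS₁ hSd.symm (by rw [hSc, Set.union_comm]) hu1 (Or.inl htB)
      · obtain ⟨w, htB⟩ := mem_sB_of_not_mem_Dset ht
        exact key2 w S₂ S₁ hS₂ hS₁ hSd.symm (by rw [hSc, Set.union_comm]) hv1 (Or.inl htB)
    have hsub2 : u ∈ S₂ → v ∈ S₂ → (Dset z u ∩ Dset z v)ᶜ ⊆ S₂ := by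
      intro hu2 hv2 t ht
      rw [Set.mem_compl_iff, Set.mem_inter_iff, not_and_or] at ht
      rcases ht with ht | ht
      · obtain ⟨w, htB⟩ := mem_sB_of_not_mem_Dset ht
        exact key1 w S₁ S₂ hS₁ hS₂ hSd hSc hu2 (Or.inl htB)
      · obtain ⟨w, htB⟩ := mem_sB_of_not_mem_Dset ht
        exact key2 w S₁ S₂ hS₁ hS₂ hSd hSc hv2 (Or.inl htB)
    rcases huS with hu | hu <;> rcases hvS with hv | hv
    · obtain ⟨t, htS₂, htG⟩ :=
        mem_closure_iff.mp (mem_closure_compl_of_frontier hm₂) S₂ hS₂ hm₂S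
      exact Set.disjoint_left.mp hSd (hsub1 hu hv htG) htS₂
    · -- u ∈ S₁, v ∈ S₂ : s separates u and v
      have hsuv : Separates s u v := ⟨S₁, S₂, hS₁, hS₂, hu, hv, hSd, hSc⟩
      have hzs : z ≠ s := fun e => hns (e ▸ hsuv)
      have hzS : z ∈ S₁ ∪ S₂ := by
        rw [← hSc]
        simp only [Set.mem_compl_iff, Set.mem_singleton_iff]
        exact hzs
      rcases hzS with h | h
      · exact hsnot2 ⟨S₁, S₂, hS₁, hS₂, h, hv, hSd, hSc⟩
      · exact hsnot1 ⟨S₂, S₁, hS₂, hS₁, h, hu, hSd.symm, by rw [hSc, Set.union_comm]⟩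
    · have hsuv : Separates s u v :=
        ⟨S₂, S₁, hS₂, hS₁, hu, hv, hSd.symm, by rw [hSc, Set.union_comm]⟩
      have hzs : z ≠ s := fun e => hns (e ▸ hsuv)
      have hzS : z ∈ S₁ ∪ S₂ := by
        rw [← hSc]
        simp only [Set.mem_compl_iff, Set.mem_singleton_iff]
        exact hzs
      rcases hzS with h | h
      · exact hsnot1 ⟨S₁, S₂, hS₁, hS₂, h, hu, hSd, hSc⟩
      · exact hsnot2 ⟨S₂, S₁, hS₂, hS₁, h, hv, hSd.symm, by rw [hSc, Set.union_comm]⟩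
    · obtain ⟨t, htS₁, htG⟩ :=
        mem_closure_iff.mp (mem_closure_compl_of_frontier hm₁) S₁ hS₁ hm₁S
      exact Set.disjoint_left.mp hSd htS₁ (hsub2 hu hv htG)
  -- pick the frontier point `m`
  have hGproper : Dset z u ∩ Dset z v ≠ Set.univ := fun e => huG (e ▸ Set.mem_univ u)
  obtain ⟨m, hm⟩ := frontier_nonempty_of_closed hGcl ⟨z, hzG⟩ hGproper
  have hmG : m ∈ Dset z u ∩ Dset z v := frontier_subset_self hGcl hm
  -- m is a frontier point of one of the two Dsets
  have hm' : m ∈ frontier (Dset z u) ∨ m ∈ frontier (Dset z v) := by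
    have hmcl : m ∈ closure ((Dset z u ∩ Dset z v)ᶜ) := mem_closure_compl_of_frontier hm
    rw [Set.compl_inter, closure_union] at hmcl
    rcases hmcl with h | h
    · left
      rw [frontier_eq_closure_inter_closure]
      exact ⟨subset_closure hmG.1, h⟩
    · right
      rw [frontier_eq_closure_inter_closure]
      exact ⟨subset_closure hmG.2, h⟩
  -- m separates u and v, hence z ≠ m
  have hmsep : Separates m u v := by
    rcases hm' with h | h
    · have hvm : v ≠ m := fun e => hvG (e ▸ hmG)
      exact Dset_frontier_cut hsep hzu h (y_not_mem_Dset ⟨wzu, hwzu⟩) hvD hvm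
    · have hum : u ≠ m := fun e => huG (e ▸ hmG)
      exact sep_symm (Dset_frontier_cut hsep hzv h (y_not_mem_Dset ⟨wzv, hwzv⟩) huE hum)
  have hzm : z ≠ m := fun e => hns (e ▸ hmsep)
  -- final cut at m
  obtain ⟨hopen, hdisj, hcompl⟩ := frontier_cut hGcl hm (fun t ht => hGfront t ht m hm)
  refine ⟨m, (Dset z u ∩ Dset z v) \ {m}, (Dset z u ∩ Dset z v)ᶜ, hopen,
    hGcl.isOpen_compl, ⟨hzG, hzm⟩, huG, hvG, hdisj, ?_⟩
  rw [hcompl, Set.union_comm]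

end Part5
section Part6

variable {X : Type*} [TopologicalSpace X] [CompactSpace X] [T2Space X] [ConnectedSpace X]

lemma Itv_self {u : X} : Itv u u = {u} := by
  ext t
  constructor
  · rintro (h | h | h)
    · obtain ⟨U, V, _, _, hu1, hu2, hd, _⟩ := h
      exact absurd (Set.disjoint_left.mp hd hu1 hu2) (fun h => h)
    · exact h
    · exact h
  · rintro rfl
    exact left_mem_Itv

lemma sides_sInter {u v : X} {T : Set (Set X)} (hTfin : T.Finite) :
    (∀ S ∈ T, ∃ (w : X) (A B : Set X), IsOpen A ∧ IsOpen B ∧ u ∈ B ∧ v ∈ B ∧ Disjoint A B ∧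
      ({w}ᶜ : Set X) = A ∪ B ∧ S = B ∪ {w}) →
    IsPreconnected (⋂₀ T) ∧ IsClosed (⋂₀ T) := by
  refine Set.Finite.induction_on (motive := fun T _ => (∀ S ∈ T, ∃ (w : X) (A B : Set X),
    IsOpen A ∧ IsOpen B ∧ u ∈ B ∧ v ∈ B ∧ Disjoint A B ∧ ({w}ᶜ : Set X) = A ∪ B ∧ S = B ∪ {w}) →
    IsPreconnected (⋂₀ T) ∧ IsClosed (⋂₀ T)) T hTfin ?_ ?_
  · intro _
    rw [Set.sInter_empty]
    exact ⟨isPreconnected_univ, isClosed_univ⟩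
  · intro a T _ _ IH hprop
    have hrest := IH (fun S hS => hprop S (Set.mem_insert_of_mem _ hS))
    obtain ⟨w, A, B, hA, hB, huB, hvB, hd, hc, heq⟩ := hprop a (Set.mem_insert _ _)
    rw [Set.sInter_insert, heq, Set.inter_comm]
    constructor
    · exact inter_side_preconnected hrest.1 hrest.2 hB hA hd.symm
        (by rw [hc, Set.union_comm])
    · exact hrest.2.inter (side_union_closed hA hd.symm (by rw [hc, Set.union_comm]))

/-- **L4**: intervals in a dendron are preconnected. -/
lemma Itv_preconnected (hsep : ∀ a b : X, a ≠ b → ∃ w, Separates w a b) (u v : X) :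
    IsPreconnected (Itv u v) := by
  by_cases huv : u = v
  · subst huv
    rw [Itv_self]
    exact isPreconnected_singleton
  set K : Set (Set X) := {C | ∃ T : Set (Set X), T.Finite ∧
      (∀ S ∈ T, ∃ (w : X) (A B : Set X), IsOpen A ∧ IsOpen B ∧ u ∈ B ∧ v ∈ B ∧ Disjoint A B ∧
        ({w}ᶜ : Set X) = A ∪ B ∧ S = B ∪ {w}) ∧ C = ⋂₀ T} with hK
  have hmem : ∀ C ∈ K, IsClosed C ∧ IsPreconnected C ∧ Itv u v ⊆ C := by
    rintro C ⟨T, hTfin, hTside, rfl⟩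
    have h2 := sides_sInter hTfin hTside
    refine ⟨h2.2, h2.1, ?_⟩
    intro t ht
    rw [Set.mem_sInter]
    intro S hS
    obtain ⟨w, A, B, hA, hB, huB, hvB, hd, hc, rfl⟩ := hTside S hS
    rcases ht with h | h | h
    · exact mem_of_separates h
        (side_union_preconnected hB hA hd.symm (by rw [hc, Set.union_comm]))
        (Or.inl huB) (Or.inl hvB)
    · exact Or.inl (h ▸ huB)
    · exact Or.inl (h ▸ hvB)
  have hXmem : Set.univ ∈ K := ⟨∅, Set.finite_empty, by simp, by rw [Set.sInter_empty]⟩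
  have hIeq : Itv u v = ⋂₀ K := by
    apply Set.Subset.antisymm
    · intro t ht
      rw [Set.mem_sInter]
      intro C hC
      exact (hmem C hC).2.2 ht
    · intro t ht
      by_contra htI
      have htu : t ≠ u := fun e => htI (e ▸ left_mem_Itv)
      have htv : t ≠ v := fun e => htI (e ▸ right_mem_Itv)
      have htns : ¬ Separates t u v := fun h => htI (Or.inl h)
      obtain ⟨w, A, B, hA, hB, htA, huB, hvB, hd, hc⟩ := claimA hsep htu htv htns
      have hCK : (B ∪ {w}) ∈ K := by
        refine ⟨{B ∪ {w}}, Set.finite_singleton _, ?_, by rw [Set.sInter_singleton]⟩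
        rintro S hS
        rw [Set.mem_singleton_iff] at hS
        exact ⟨w, A, B, hA, hB, huB, hvB, hd, hc, hS⟩
      rcases Set.mem_sInter.mp ht _ hCK with h | h
      · exact Set.disjoint_left.mp hd htA h
      · simp only [Set.mem_singleton_iff] at h
        have h2 : t ∈ A ∪ B := Or.inl htA
        rw [← hc] at h2
        exact h2 h
  rw [hIeq, Set.sInter_eq_iInter]
  have hne : Nonempty ↥K := ⟨⟨Set.univ, hXmem⟩⟩
  apply dirInter_preconnected
  · rintro ⟨C₁, T₁, hT₁fin, hT₁, rfl⟩ ⟨C₂, T₂, hT₂fin, hT₂, rfl⟩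
    refine ⟨⟨⋂₀ (T₁ ∪ T₂), ⟨T₁ ∪ T₂, hT₁fin.union hT₂fin, ?_, rfl⟩⟩, ?_, ?_⟩
    · rintro S (hS | hS)
      · exact hT₁ S hS
      · exact hT₂ S hS
    · show ⋂₀ (T₁ ∪ T₂) ⊆ ⋂₀ T₁
      rw [Set.sInter_union]
      exact Set.inter_subset_left
    · show ⋂₀ (T₁ ∪ T₂) ⊆ ⋂₀ T₂
      rw [Set.sInter_union]
      exact Set.inter_subset_right
  · exact fun i => (hmem _ i.2).1
  · exact fun i => (hmem _ i.2).2.1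

end Part6

end Dendron5

/-- For dendrons `X`, `Y` and any (not necessarily continuous) map
`f : X → Y`:  `f` is interval preserving (B-monotone) iff the preimage of every connected
subset of `Y` is connected (C-monotone). -/
theorem stmt_5 {X Y : Type*}
    [TopologicalSpace X] [CompactSpace X] [T2Space X] [ConnectedSpace X]
    [TopologicalSpace Y] [CompactSpace Y] [T2Space Y] [ConnectedSpace Y]
    (hsepX : ∀ u v : X, u ≠ v → ∃ w, Separates w u v)
    (hsepY : ∀ u v : Y, u ≠ v → ∃ w, Separates w u v)
    (f : X → Y) :
    (∀ u w v : X, Between u w v → Between (f u) (f w) (f v)) ↔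
      (∀ C : Set Y, IsPreconnected C → IsPreconnected (f ⁻¹' C)) := by
  constructor
  · intro hB C hC
    rcases Set.eq_empty_or_nonempty (f ⁻¹' C) with he | ⟨a, ha⟩
    · rw [he]
      exact isPreconnected_empty
    · have heq : f ⁻¹' C = ⋃₀ {S | ∃ b ∈ f ⁻¹' C, S = Dendron5.Itv a b} := by
        ext x
        constructor
        · intro hx
          exact ⟨Dendron5.Itv a x, ⟨x, hx, rfl⟩, Dendron5.right_mem_Itv⟩
        · rintro ⟨S, ⟨b, hb, rfl⟩, hx⟩
          rcases hB a x b hx with h | h | h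
          · exact Set.mem_preimage.mpr
              (Dendron5.mem_of_separates h hC (Set.mem_preimage.mp ha) (Set.mem_preimage.mp hb))
          · have : f x = f a := h
            rw [Set.mem_preimage, this]
            exact ha
          · have : f x = f b := h
            rw [Set.mem_preimage, this]
            exact hb
      rw [heq]
      apply isPreconnected_sUnion a
      · rintro S ⟨b, hb, rfl⟩
        exact Dendron5.left_mem_Itv
      · rintro S ⟨b, hb, rfl⟩
        exact Dendron5.Itv_preconnected hsepX a b
  · intro hC u w v hbtw
    rcases hbtw with h | h | h
    · have hpre : IsPreconnected (f ⁻¹' Dendron5.Itv (f u) (f v)) :=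
        hC _ (Dendron5.Itv_preconnected hsepY (f u) (f v))
      have hw : w ∈ f ⁻¹' Dendron5.Itv (f u) (f v) :=
        Dendron5.mem_of_separates h hpre
          (Set.mem_preimage.mpr Dendron5.left_mem_Itv)
          (Set.mem_preimage.mpr Dendron5.right_mem_Itv)
      exact hw
    · exact Or.inr (Or.inl (congrArg f h))
    · exact Or.inr (Or.inr (congrArg f h))
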